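/- For a word x in Z_m^n chosen uniformly at random, the expected number of maximal alternating segments of x equals 1 + (n-2)(m-1)(m-2)/m^2 + (n-1)/m. -/

import Mathlib

open Finset

/-- The (0-indexed, inclusive) segment `x_i,…,x_j` is alternating, i.e. of the
form `abab…` : adjacent symbols differ and the segment has period 2. -/
def IsAltOn {m : ℕ} (x : ℕ → Fin m) (i j : ℕ) : Prop :=
  (∀ k ∈ Finset.Ico i j, x k ≠ x (k + 1)) ∧ ∀ k ∈ Finset.Ico i (j - 1), x k = x (k + 2)

instance {m : ℕ} (x : ℕ → Fin m) (i j : ℕ) : Decidable (IsAltOn x i j) :=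
  inferInstanceAs (Decidable (_ ∧ _))

/-- The set of (0-indexed, inclusive) index pairs of maximal alternating segments
of the word `x_0,…,x_{n-1}`. -/
def altSegs {m : ℕ} (n : ℕ) (x : ℕ → Fin m) : Finset (ℕ × ℕ) :=
  (Finset.range n ×ˢ Finset.range n).filter (fun p => p.1 ≤ p.2 ∧ IsAltOn x p.1 p.2 ∧
    (p.1 = 0 ∨ ¬ IsAltOn x (p.1 - 1) p.2) ∧ (p.2 = n - 1 ∨ ¬ IsAltOn x p.1 (p.2 + 1)))

/-- `a(x)` : the number of maximal alternating segments of `x_0,…,x_{n-1}`. -/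
def aCount {m : ℕ} (n : ℕ) (x : ℕ → Fin m) : ℕ := (altSegs n x).card

/-- `∑ s_i` : the sum of the lengths of the maximal alternating segments. -/
def sumLen {m : ℕ} (n : ℕ) (x : ℕ → Fin m) : ℕ := ∑ p ∈ altSegs n x, (p.2 - p.1 + 1)

/-- `∑ s_i²` : the sum of the squares of the lengths of the maximal alternating segments. -/
def sumLenSq {m : ℕ} (n : ℕ) (x : ℕ → Fin m) : ℕ := ∑ p ∈ altSegs n x, (p.2 - p.1 + 1) ^ 2

/-- `ρ(x)` : the number of runs of the word `x_0,…,x_{n-1}`. -/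
def rho {m : ℕ} (n : ℕ) (x : ℕ → Fin m) : ℕ :=
  1 + ((Finset.range (n - 1)).filter (fun i => x i ≠ x (i + 1))).card

/-- `h(x)` : the length of the first maximal alternating segment of `x_0,…,x_{n-1}`. -/
def headAlt {m : ℕ} (n : ℕ) (x : ℕ → Fin m) : ℕ :=
  ((Finset.range n).filter (fun j => IsAltOn x 0 j)).card

/-- `t(x)` : the length of the last maximal alternating segment of `x_0,…,x_{n-1}`. -/
def tailAlt {m : ℕ} (n : ℕ) (x : ℕ → Fin m) : ℕ :=
  ((Finset.range n).filter (fun j => IsAltOn x (n - 1 - j) (n - 1))).card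

/-- Extend a word of length `n` to a function `ℕ → Fin m` (junk value `0` beyond `n`). -/
def extWord {m : ℕ} (n : ℕ) (hm : 0 < m) (y : Fin n → Fin m) : ℕ → Fin m :=
  fun i => if h : i < n then y ⟨i, h⟩ else ⟨0, hm⟩

/-- The FLL ball of radius 1 around `x` : all words `y` of length `n` sharing with `x`
a common subsequence of length `n - 1` (equivalently, `d_l(x,y) ≤ 1`). -/
def L1ball {m : ℕ} (n : ℕ) (x : Fin n → Fin m) : Set (Fin n → Fin m) :=
  {y | ∃ z : List (Fin m), z.length = n - 1 ∧ z.Sublist (List.ofFn x) ∧ z.Sublist (List.ofFn y)}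

/-- `|L_1(x)|` : the size of the FLL ball of radius 1 around `x`. -/
noncomputable def L1size {m : ℕ} (n : ℕ) (x : Fin n → Fin m) : ℕ := (L1ball n x).ncard

/-- `f_n(y)` for binary words `y` of length `len` : `ρ(y)·n - (1/2)∑ s_j²`. -/
noncomputable def fB (n len : ℕ) (y : ℕ → Fin 2) : ℝ :=
  (rho len y : ℝ) * n - (sumLenSq len y : ℝ) / 2

/-- `f_{m,n}(y)` for words `y` of length `len` over `Z_m` :
`ρ(y)(mn-n-1) - (1/2)∑ s_j² + (3/2)∑ s_j - a(y)`. -/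
noncomputable def fM (m n len : ℕ) (y : ℕ → Fin m) : ℝ :=
  (rho len y : ℝ) * ((m : ℝ) * n - n - 1) - (sumLenSq len y : ℝ) / 2
    + 3 / 2 * (sumLen len y : ℝ) - (aCount len y : ℝ)

/-! ### Auxiliary lemmas for `stmt4` -/

lemma isAltOn_mono {m : ℕ} {x : ℕ → Fin m} {i i' j j' : ℕ} (h : IsAltOn x i j)
    (hi : i ≤ i') (hj : j' ≤ j) : IsAltOn x i' j' := by
  refine ⟨fun k hk => h.1 k ?_, fun k hk => h.2 k ?_⟩ <;>
    simp only [Finset.mem_Ico] at * <;> omega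

lemma isAltOn_refl {m : ℕ} (x : ℕ → Fin m) (i : ℕ) : IsAltOn x i i := by
  refine ⟨fun k hk => ?_, fun k hk => ?_⟩ <;> simp only [Finset.mem_Ico] at hk <;> omega

/-- `i` is the starting index of some maximal alternating segment. -/
def Start {m : ℕ} (n : ℕ) (x : ℕ → Fin m) (i : ℕ) : Prop :=
  i = 0 ∨ x (i-1) = x i ∨
    (i + 1 < n ∧ x (i-1) ≠ x i ∧ x i ≠ x (i+1) ∧ x (i-1) ≠ x (i+1))

instance {m : ℕ} (n : ℕ) (x : ℕ → Fin m) (i : ℕ) : Decidable (Start n x i) := by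
  unfold Start; infer_instance

lemma mem_altSegs {m n : ℕ} {x : ℕ → Fin m} {p : ℕ × ℕ} :
    p ∈ altSegs n x ↔ p.1 < n ∧ p.2 < n ∧ p.1 ≤ p.2 ∧ IsAltOn x p.1 p.2 ∧
      (p.1 = 0 ∨ ¬ IsAltOn x (p.1 - 1) p.2) ∧ (p.2 = n - 1 ∨ ¬ IsAltOn x p.1 (p.2 + 1)) := by
  simp [altSegs, Finset.mem_filter, Finset.mem_product, and_assoc]

lemma aCount_eq_startCount {m n : ℕ} (x : ℕ → Fin m) :
    aCount n x = ((Finset.range n).filter (Start n x)).card := by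
  apply Finset.card_bij (fun p _ => p.1)
  · intro p hp
    rw [mem_altSegs] at hp
    obtain ⟨h1, h2, h3, h4, h5, h6⟩ := hp
    simp only [Finset.mem_filter, Finset.mem_range]
    refine ⟨h1, ?_⟩
    unfold Start
    by_cases h0 : p.1 = 0
    · exact Or.inl h0
    have hL : ¬ IsAltOn x (p.1 - 1) p.2 := h5.resolve_left h0
    by_cases he : x (p.1 - 1) = x p.1
    · exact Or.inr (Or.inl he)
    right; right
    have hi1 : 1 ≤ p.1 := Nat.one_le_iff_ne_zero.2 h0
    have hij : p.1 < p.2 := by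
      rcases Nat.lt_or_ge p.1 p.2 with h | h
      · exact h
      · have hpe : p.2 = p.1 := le_antisymm h h3
        exfalso; apply hL
        rw [hpe]
        constructor
        · intro k hk; simp only [Finset.mem_Ico] at hk
          have hke : k = p.1 - 1 := by omega
          subst hke
          rw [show p.1 - 1 + 1 = p.1 by omega]
          exact he
        · intro k hk; simp only [Finset.mem_Ico] at hk; omega
    have hne2 : x p.1 ≠ x (p.1 + 1) := h4.1 p.1 (by simp only [Finset.mem_Ico]; omega)
    refine ⟨by omega, he, hne2, ?_⟩
    intro heq
    apply hL
    constructor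
    · intro k hk; simp only [Finset.mem_Ico] at hk
      by_cases hk1 : k = p.1 - 1
      · subst hk1
        rw [show p.1 - 1 + 1 = p.1 by omega]
        exact he
      · exact h4.1 k (by simp only [Finset.mem_Ico]; omega)
    · intro k hk; simp only [Finset.mem_Ico] at hk
      by_cases hk1 : k = p.1 - 1
      · subst hk1
        rw [show p.1 - 1 + 2 = p.1 + 1 by omega]
        exact heq
      · exact h4.2 k (by simp only [Finset.mem_Ico]; omega)
  · intro p hp q hq hpq
    rw [mem_altSegs] at hp hq
    refine Prod.ext hpq ?_
    by_contra hne
    rcases Nat.lt_or_ge p.2 q.2 with h | h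
    · rcases hp.2.2.2.2.2 with h1 | h1
      · omega
      · exact h1 (isAltOn_mono hq.2.2.2.1 (le_of_eq hpq.symm) (by omega))
    · have h' : q.2 < p.2 := by omega
      rcases hq.2.2.2.2.2 with h1 | h1
      · omega
      · exact h1 (isAltOn_mono hp.2.2.2.1 (le_of_eq hpq) (by omega))
  · intro i hi
    simp only [Finset.mem_filter, Finset.mem_range] at hi
    obtain ⟨hin, hst⟩ := hi
    have hne : ((Finset.range n).filter (fun j => i ≤ j ∧ IsAltOn x i j)).Nonempty :=
      ⟨i, by simp [hin, isAltOn_refl]⟩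
    set J := (Finset.range n).filter (fun j => i ≤ j ∧ IsAltOn x i j) with hJ
    set j := J.max' hne with hjdef
    have hjmem : j ∈ (Finset.range n).filter (fun j => i ≤ j ∧ IsAltOn x i j) := J.max'_mem hne
    rw [Finset.mem_filter, Finset.mem_range] at hjmem
    obtain ⟨hjn, hij, halt⟩ := hjmem
    refine ⟨(i, j), ?_, rfl⟩
    rw [mem_altSegs]
    refine ⟨hin, hjn, hij, halt, ?_, ?_⟩
    · by_cases h0 : i = 0
      · exact Or.inl h0
      right
      unfold Start at hst
      rcases hst with h | h | h
      · exact absurd h h0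
      · intro hA
        have h1 := hA.1 (i - 1) (by simp only [Finset.mem_Ico]; omega)
        rw [show i - 1 + 1 = i by omega] at h1
        exact h1 h
      · obtain ⟨hi1, hne1, hne2, hne3⟩ := h
        have hj1 : i + 1 ≤ j := by
          refine J.le_max' _ ?_
          show _ ∈ (Finset.range n).filter (fun j => i ≤ j ∧ IsAltOn x i j)
          rw [Finset.mem_filter, Finset.mem_range]
          refine ⟨hi1, by omega, fun k hk => ?_, fun k hk => ?_⟩ <;>
            simp only [Finset.mem_Ico] at hk
          · have : k = i := by omega
            subst this; exact hne2
          · omega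
        intro hA
        have h1 := hA.2 (i - 1) (by simp only [Finset.mem_Ico]; omega)
        rw [show i - 1 + 2 = i + 1 by omega] at h1
        exact hne3 h1
    · by_cases hlast : j = n - 1
      · exact Or.inl hlast
      right
      intro hA
      have hmem : j + 1 ∈ J := by
        show _ ∈ (Finset.range n).filter (fun j => i ≤ j ∧ IsAltOn x i j)
        rw [Finset.mem_filter, Finset.mem_range]
        exact ⟨by omega, by omega, hA⟩
      have := J.le_max' _ hmem
      omega

lemma start_ite_split {m n : ℕ} (x : ℕ → Fin m) (i : ℕ) :
    (if Start n x i then (1 : ℕ) else 0)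
      = (if i = 0 then 1 else 0) + (if 1 ≤ i ∧ x (i-1) = x i then 1 else 0)
        + (if 1 ≤ i ∧ i + 1 < n ∧ x (i-1) ≠ x i ∧ x i ≠ x (i+1) ∧ x (i-1) ≠ x (i+1)
            then 1 else 0) := by
  unfold Start
  by_cases h0 : i = 0
  · subst h0; simp
  · have h1 : 1 ≤ i := by omega
    by_cases he : x (i-1) = x i
    · simp [h0, he, h1]
    · by_cases ht : i + 1 < n ∧ x i ≠ x (i+1) ∧ x (i-1) ≠ x (i+1)
      · simp [h0, he, h1, ht.1, ht.2.1, ht.2.2]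
      · have hf : ¬(i + 1 < n ∧ x (i-1) ≠ x i ∧ x i ≠ x (i+1) ∧ x (i-1) ≠ x (i+1)) := by
          tauto
        simp [h0, he, h1, hf]

lemma extWord_lt {m n : ℕ} (hm0 : 0 < m) (y : Fin n → Fin m) {k : ℕ} (hk : k < n) :
    extWord n hm0 y k = y ⟨k, hk⟩ := by
  simp [extWord, hk]

lemma fixCount {n m : ℕ} (s : Finset (Fin n)) (z : Fin n → Fin m) :
    (Finset.univ.filter fun y : Fin n → Fin m => ∀ i ∈ s, y i = z i).card = m ^ (n - s.card) := by
  have hcard : (Finset.univ.filter fun y : Fin n → Fin m => ∀ i ∈ s, y i = z i).card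
      = (Finset.univ : Finset ({i : Fin n // i ∉ s} → Fin m)).card := by
    refine Finset.card_bij' (fun y _ => fun j => y j.1)
      (fun w _ => fun i => if h : i ∈ s then z i else w ⟨i, h⟩) ?_ ?_ ?_ ?_
    · intro y hy; exact Finset.mem_univ _
    · intro w _
      simp only [Finset.mem_filter, Finset.mem_univ, true_and]
      intro i hi; simp [hi]
    · intro y hy
      simp only [Finset.mem_filter, Finset.mem_univ, true_and] at hy
      funext i
      by_cases h : i ∈ s
      · simp [h, hy i h]
      · simp [h]
    · intro w _
      funext j
      simp [j.2]
  rw [hcard, Finset.card_univ, Fintype.card_fun, Fintype.card_fin]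
  congr 1
  rw [Fintype.card_subtype_compl, Fintype.card_fin, Fintype.card_coe]


lemma fixCount2 {n m : ℕ} (a b : Fin n) (hab : a ≠ b) (u v : Fin m) :
    (Finset.univ.filter fun y : Fin n → Fin m => y a = u ∧ y b = v).card = m ^ (n - 2) := by
  have h2 : ({a, b} : Finset (Fin n)).card = 2 := by
    rw [Finset.card_insert_of_notMem (by simp [hab]), Finset.card_singleton]
  have heq : (Finset.univ.filter fun y : Fin n → Fin m => y a = u ∧ y b = v)
      = Finset.univ.filter fun y => ∀ i ∈ ({a, b} : Finset (Fin n)),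
          y i = (fun i => if i = a then u else v) i := by
    apply Finset.filter_congr
    intro y _
    simp only [Finset.forall_mem_insert, Finset.mem_singleton, forall_eq, if_true]
    rw [if_neg (Ne.symm hab)]
  rw [heq, fixCount, h2]

lemma fixCount3 {n m : ℕ} (a b c : Fin n) (hab : a ≠ b) (hbc : b ≠ c) (hac : a ≠ c)
    (u v w : Fin m) :
    (Finset.univ.filter fun y : Fin n → Fin m => y a = u ∧ y b = v ∧ y c = w).card
      = m ^ (n - 3) := by
  have h3 : ({a, b, c} : Finset (Fin n)).card = 3 := by
    rw [Finset.card_insert_of_notMem (by simp [hab, hac]),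
      Finset.card_insert_of_notMem (by simp [hbc]), Finset.card_singleton]
  have heq : (Finset.univ.filter fun y : Fin n → Fin m => y a = u ∧ y b = v ∧ y c = w)
      = Finset.univ.filter fun y => ∀ i ∈ ({a, b, c} : Finset (Fin n)),
          y i = (fun i => if i = a then u else if i = b then v else w) i := by
    apply Finset.filter_congr
    intro y _
    simp only [Finset.forall_mem_insert, Finset.mem_singleton, forall_eq, if_true]
    rw [if_neg (Ne.symm hab), if_neg (Ne.symm hac), if_neg (Ne.symm hbc)]
  rw [heq, fixCount, h3]

lemma pairCount {n m : ℕ} (a b : Fin n) (hab : a ≠ b) :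
    (Finset.univ.filter fun y : Fin n → Fin m => y a = y b).card = m * m ^ (n - 2) := by
  rw [Finset.card_eq_sum_card_fiberwise
    (f := fun y : Fin n → Fin m => y a) (t := Finset.univ) (fun _ _ => Finset.mem_univ _)]
  have hfib : ∀ u : Fin m,
      (((Finset.univ.filter fun y : Fin n → Fin m => y a = y b).filter fun y => y a = u)).card
        = m ^ (n - 2) := by
    intro u
    rw [Finset.filter_filter]
    have heq : (Finset.univ.filter fun y : Fin n → Fin m => y a = y b ∧ y a = u)
        = Finset.univ.filter fun y => y a = u ∧ y b = u := by
      apply Finset.filter_congr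
      intro y _
      constructor
      · rintro ⟨h1, h2⟩; exact ⟨h2, h1.symm.trans h2⟩
      · rintro ⟨h1, h2⟩; exact ⟨h1.trans h2.symm, h1⟩
    rw [heq, fixCount2 a b hab]
  rw [Finset.sum_congr rfl fun u (_ : u ∈ Finset.univ) => hfib u, Finset.sum_const,
    Finset.card_univ, Fintype.card_fin, smul_eq_mul]

lemma distinctTriples (m : ℕ) :
    (Finset.univ.filter fun t : Fin m × Fin m × Fin m =>
        t.1 ≠ t.2.1 ∧ t.2.1 ≠ t.2.2 ∧ t.1 ≠ t.2.2).card = m * ((m - 1) * (m - 2)) := by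
  have inner : ∀ u v : Fin m, u ≠ v →
      (∑ w : Fin m, if u ≠ v ∧ v ≠ w ∧ u ≠ w then (1 : ℕ) else 0) = m - 2 := by
    intro u v huv
    rw [← Finset.card_filter]
    have h : (Finset.univ.filter fun w : Fin m => u ≠ v ∧ v ≠ w ∧ u ≠ w)
        = ({v, u} : Finset (Fin m))ᶜ := by
      ext w
      simp only [Finset.mem_filter, Finset.mem_univ, true_and, Finset.mem_compl,
        Finset.mem_insert, Finset.mem_singleton]
      constructor
      · rintro ⟨_, h2, h3⟩ (h | h)
        · exact h2 h.symm
        · exact h3 h.symm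
      · intro h
        push_neg at h
        exact ⟨huv, fun he => h.1 he.symm, fun he => h.2 he.symm⟩
    rw [h, Finset.card_compl, Fintype.card_fin,
      Finset.card_insert_of_notMem (by simp [huv.symm]), Finset.card_singleton]
  have middle : ∀ u : Fin m,
      (∑ v : Fin m, ∑ w : Fin m, if u ≠ v ∧ v ≠ w ∧ u ≠ w then (1 : ℕ) else 0)
        = (m - 1) * (m - 2) := by
    intro u
    have step : ∀ v : Fin m,
        (∑ w : Fin m, if u ≠ v ∧ v ≠ w ∧ u ≠ w then (1 : ℕ) else 0)
          = if u ≠ v then m - 2 else 0 := by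
      intro v
      by_cases huv : u = v
      · simp [huv]
      · rw [inner u v huv, if_pos huv]
    rw [Finset.sum_congr rfl fun v (_ : v ∈ Finset.univ) => step v, ← Finset.sum_filter,
      Finset.sum_const, smul_eq_mul]
    congr 1
    have h : (Finset.univ.filter fun v : Fin m => u ≠ v) = ({u} : Finset (Fin m))ᶜ := by
      ext v; simp [eq_comm, ne_comm]
    rw [h, Finset.card_compl, Fintype.card_fin, Finset.card_singleton]
  simp only [Finset.card_filter, Fintype.sum_prod_type]
  rw [Finset.sum_congr rfl fun u (_ : u ∈ Finset.univ) => middle u, Finset.sum_const,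
    Finset.card_univ, Fintype.card_fin, smul_eq_mul]

lemma tripleCount {n m : ℕ} (a b c : Fin n) (hab : a ≠ b) (hbc : b ≠ c) (hac : a ≠ c) :
    (Finset.univ.filter fun y : Fin n → Fin m => y a ≠ y b ∧ y b ≠ y c ∧ y a ≠ y c).card
      = m * ((m - 1) * (m - 2)) * m ^ (n - 3) := by
  rw [Finset.card_eq_sum_card_fiberwise
    (f := fun y : Fin n → Fin m => (y a, y b, y c)) (t := Finset.univ)
    (fun _ _ => Finset.mem_univ _)]
  have hfib : ∀ t : Fin m × Fin m × Fin m,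
      (((Finset.univ.filter fun y : Fin n → Fin m =>
          y a ≠ y b ∧ y b ≠ y c ∧ y a ≠ y c).filter fun y => (y a, y b, y c) = t)).card
        = if t.1 ≠ t.2.1 ∧ t.2.1 ≠ t.2.2 ∧ t.1 ≠ t.2.2 then m ^ (n - 3) else 0 := by
    intro t
    rw [Finset.filter_filter]
    by_cases ht : t.1 ≠ t.2.1 ∧ t.2.1 ≠ t.2.2 ∧ t.1 ≠ t.2.2
    · rw [if_pos ht]
      have heq : (Finset.univ.filter fun y : Fin n → Fin m =>
            (y a ≠ y b ∧ y b ≠ y c ∧ y a ≠ y c) ∧ (y a, y b, y c) = t)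
          = Finset.univ.filter fun y => y a = t.1 ∧ y b = t.2.1 ∧ y c = t.2.2 := by
        apply Finset.filter_congr
        intro y _
        simp only [Prod.ext_iff]
        constructor
        · rintro ⟨_, h⟩; exact h
        · rintro ⟨h1, h2, h3⟩
          refine ⟨⟨?_, ?_, ?_⟩, h1, h2, h3⟩
          · rw [h1, h2]; exact ht.1
          · rw [h2, h3]; exact ht.2.1
          · rw [h1, h3]; exact ht.2.2
      rw [heq, fixCount3 a b c hab hbc hac]
    · rw [if_neg ht, Finset.card_eq_zero]
      apply Finset.filter_false_of_mem
      intro y _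
      rintro ⟨hd, hteq⟩
      apply ht
      rw [← hteq]
      exact hd
  rw [Finset.sum_congr rfl fun t (_ : t ∈ Finset.univ) => hfib t, ← Finset.sum_filter,
    Finset.sum_const, smul_eq_mul, distinctTriples]


lemma sum_aCount {n m : ℕ} (hn : 2 ≤ n) (hm0 : 0 < m) :
    (∑ y : Fin n → Fin m, aCount n (extWord n hm0 y))
      = m ^ n + (n - 1) * (m * m ^ (n - 2))
        + (n - 2) * (m * ((m - 1) * (m - 2)) * m ^ (n - 3)) := by
  have hcardfun : Fintype.card (Fin n → Fin m) = m ^ n := by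
    rw [Fintype.card_fun, Fintype.card_fin, Fintype.card_fin]
  have hstep : ∀ y : Fin n → Fin m, aCount n (extWord n hm0 y)
      = ∑ i ∈ Finset.range n,
          ((if i = 0 then (1:ℕ) else 0)
            + (if 1 ≤ i ∧ extWord n hm0 y (i-1) = extWord n hm0 y i then 1 else 0)
            + (if 1 ≤ i ∧ i + 1 < n ∧ extWord n hm0 y (i-1) ≠ extWord n hm0 y i
                ∧ extWord n hm0 y i ≠ extWord n hm0 y (i+1)
                ∧ extWord n hm0 y (i-1) ≠ extWord n hm0 y (i+1) then 1 else 0)) := by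
    intro y
    rw [aCount_eq_startCount, Finset.card_filter]
    exact Finset.sum_congr rfl fun i _ => start_ite_split (extWord n hm0 y) i
  rw [Finset.sum_congr rfl fun y (_ : y ∈ Finset.univ) => hstep y, Finset.sum_comm]
  have hinner : ∀ i ∈ Finset.range n,
      (∑ y : Fin n → Fin m,
          ((if i = 0 then (1:ℕ) else 0)
            + (if 1 ≤ i ∧ extWord n hm0 y (i-1) = extWord n hm0 y i then 1 else 0)
            + (if 1 ≤ i ∧ i + 1 < n ∧ extWord n hm0 y (i-1) ≠ extWord n hm0 y i
                ∧ extWord n hm0 y i ≠ extWord n hm0 y (i+1)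
                ∧ extWord n hm0 y (i-1) ≠ extWord n hm0 y (i+1) then 1 else 0)))
        = (if i = 0 then m ^ n else 0) + (if 1 ≤ i then m * m ^ (n - 2) else 0)
          + (if 1 ≤ i ∧ i + 1 < n then m * ((m - 1) * (m - 2)) * m ^ (n - 3) else 0) := by
    intro i hi
    rw [Finset.mem_range] at hi
    rw [Finset.sum_add_distrib, Finset.sum_add_distrib]
    congr 1
    · congr 1
      · -- constant part
        by_cases h0 : i = 0
        · simp only [h0, if_true, Finset.sum_const, Finset.card_univ, hcardfun, smul_eq_mul,
            mul_one]
        · simp [h0]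
      · -- pair part
        by_cases h1 : 1 ≤ i
        · have him : i - 1 < n := by omega
          have hab : (⟨i - 1, him⟩ : Fin n) ≠ ⟨i, hi⟩ :=
            Fin.ne_of_val_ne (show i - 1 ≠ i by omega)
          rw [if_pos h1]
          have hrw : ∀ y : Fin n → Fin m,
              (if 1 ≤ i ∧ extWord n hm0 y (i-1) = extWord n hm0 y i then (1:ℕ) else 0)
                = if y ⟨i - 1, him⟩ = y ⟨i, hi⟩ then 1 else 0 := by
            intro y
            rw [extWord_lt hm0 y him, extWord_lt hm0 y hi]
            simp [h1]
          rw [Finset.sum_congr rfl fun y (_ : y ∈ Finset.univ) => hrw y, ← Finset.card_filter]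
          exact pairCount _ _ hab
        · simp [h1]
    · -- triple part
      by_cases h1 : 1 ≤ i ∧ i + 1 < n
      · obtain ⟨h1a, h1b⟩ := h1
        have him : i - 1 < n := by omega
        have hip : i + 1 < n := h1b
        have hab : (⟨i - 1, him⟩ : Fin n) ≠ ⟨i, hi⟩ := Fin.ne_of_val_ne (show i - 1 ≠ i by omega)
        have hbc : (⟨i, hi⟩ : Fin n) ≠ ⟨i + 1, hip⟩ := Fin.ne_of_val_ne (show i ≠ i + 1 by omega)
        have hac : (⟨i - 1, him⟩ : Fin n) ≠ ⟨i + 1, hip⟩ := Fin.ne_of_val_ne (show i - 1 ≠ i + 1 by omega)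
        rw [if_pos ⟨h1a, h1b⟩]
        have hrw : ∀ y : Fin n → Fin m,
            (if 1 ≤ i ∧ i + 1 < n ∧ extWord n hm0 y (i-1) ≠ extWord n hm0 y i
                ∧ extWord n hm0 y i ≠ extWord n hm0 y (i+1)
                ∧ extWord n hm0 y (i-1) ≠ extWord n hm0 y (i+1) then (1:ℕ) else 0)
              = if y ⟨i - 1, him⟩ ≠ y ⟨i, hi⟩ ∧ y ⟨i, hi⟩ ≠ y ⟨i + 1, hip⟩
                  ∧ y ⟨i - 1, him⟩ ≠ y ⟨i + 1, hip⟩ then 1 else 0 := by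
          intro y
          rw [extWord_lt hm0 y him, extWord_lt hm0 y hi, extWord_lt hm0 y hip]
          simp [h1a, h1b]
        rw [Finset.sum_congr rfl fun y (_ : y ∈ Finset.univ) => hrw y, ← Finset.card_filter]
        exact tripleCount _ _ _ hab hbc hac
      · rw [if_neg h1]
        have hz : ∀ y : Fin n → Fin m,
            (if 1 ≤ i ∧ i + 1 < n ∧ extWord n hm0 y (i-1) ≠ extWord n hm0 y i
                ∧ extWord n hm0 y i ≠ extWord n hm0 y (i+1)
                ∧ extWord n hm0 y (i-1) ≠ extWord n hm0 y (i+1) then (1:ℕ) else 0) = 0 := by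
          intro y
          rw [if_neg]
          tauto
        rw [Finset.sum_congr rfl fun y (_ : y ∈ Finset.univ) => hz y, Finset.sum_const,
          smul_zero]
  rw [Finset.sum_congr rfl hinner, Finset.sum_add_distrib, Finset.sum_add_distrib]
  congr 1
  · congr 1
    · rw [Finset.sum_ite_eq' (Finset.range n) 0 (fun _ => m ^ n),
        if_pos (Finset.mem_range.2 (by omega))]
    · rw [← Finset.sum_filter, Finset.sum_const, smul_eq_mul]
      congr 1
      have h : (Finset.range n).filter (fun i => 1 ≤ i) = Finset.Ico 1 n := by
        ext i
        simp only [Finset.mem_filter, Finset.mem_range, Finset.mem_Ico]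
        omega
      rw [h, Nat.card_Ico]
  · rw [← Finset.sum_filter, Finset.sum_const, smul_eq_mul]
    congr 1
    have h : (Finset.range n).filter (fun i => 1 ≤ i ∧ i + 1 < n) = Finset.Ico 1 (n - 1) := by
      ext i
      simp only [Finset.mem_filter, Finset.mem_range, Finset.mem_Ico]
      omega
    rw [h, Nat.card_Ico]
    omega


/-- For a uniformly random `x ∈ Z_m^n`, the expected number of maximal alternating
segments equals `1 + (n-2)(m-1)(m-2)/m² + (n-1)/m`. -/
theorem stmt4 (n m : ℕ) (hn : 2 ≤ n) (hm : 2 ≤ m) :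
    (∑ y : Fin n → Fin m, (aCount n (extWord n (by omega) y) : ℝ)) / (m : ℝ) ^ n
      = 1 + ((n : ℝ) - 2) * ((m : ℝ) - 1) * ((m : ℝ) - 2) / (m : ℝ) ^ 2
          + ((n : ℝ) - 1) / m := by
  have hm0 : 0 < m := by omega
  have hmr : (m : ℝ) ≠ 0 := Nat.cast_ne_zero.2 (by omega)
  have key : (∑ y : Fin n → Fin m, (aCount n (extWord n (by omega : 0 < m) y) : ℝ))
      = ((m ^ n + (n - 1) * (m * m ^ (n - 2))
          + (n - 2) * (m * ((m - 1) * (m - 2)) * m ^ (n - 3)) : ℕ) : ℝ) := by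
    rw [← Nat.cast_sum]
    exact congrArg Nat.cast (sum_aCount hn hm0)
  rw [key]
  have c1 : ((n - 1 : ℕ) : ℝ) = (n : ℝ) - 1 := by
    rw [Nat.cast_sub (by omega : 1 ≤ n)]; norm_num
  have c2 : ((n - 2 : ℕ) : ℝ) = (n : ℝ) - 2 := by
    rw [Nat.cast_sub (by omega : 2 ≤ n)]; norm_num
  have c3 : ((m - 1 : ℕ) : ℝ) = (m : ℝ) - 1 := by
    rw [Nat.cast_sub (by omega : 1 ≤ m)]; norm_num
  have c4 : ((m - 2 : ℕ) : ℝ) = (m : ℝ) - 2 := by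
    rw [Nat.cast_sub (by omega : 2 ≤ m)]; norm_num
  push_cast [c1, c2, c3, c4]
  by_cases h2 : n = 2
  · subst h2
    norm_num
    field_simp
  · have h3 : 3 ≤ n := by omega
    have e2 : (m : ℝ) ^ (n - 2) = (m : ℝ) ^ (n - 3) * m := by
      rw [← pow_succ]; congr 1; omega
    have en : (m : ℝ) ^ n = (m : ℝ) ^ (n - 3) * (m : ℝ) ^ 3 := by
      rw [← pow_add]; congr 1; omega
    rw [e2, en]
    have ha : (m : ℝ) ^ (n - 3) ≠ 0 := pow_ne_zero _ hmr
    field_simp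
    ring
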